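/- Let A = (a_ij) be an n×n matrix with nonnegative real entries whose tropical spectral radius λ = λ(A) is positive, and set B = (λ⁻¹A)*, the Kleene star of λ⁻¹A. Then a positive vector x ∈ ℝⁿ satisfies max_{i,j} a_ij·x_j/x_i = λ (i.e. x minimizes x⁻⊗A⊗x over positive vectors) if and only if x = B⊗u for some positive vector u ∈ ℝⁿ. -/

import Mathlib

/-- Max-times matrix product: `(A ⊗ B)_ik = max_j a_ij · b_jk`. -/
noncomputable def tMul {n : ℕ} (A B : Matrix (Fin n) (Fin n) ℝ) : Matrix (Fin n) (Fin n) ℝ :=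
  fun i k => ⨆ j, A i j * B j k

/-- Max-times matrix powers, with `A^⊗0 = I`. -/
noncomputable def tPow {n : ℕ} (A : Matrix (Fin n) (Fin n) ℝ) : ℕ → Matrix (Fin n) (Fin n) ℝ
  | 0 => fun i j => if i = j then 1 else 0
  | (k + 1) => tMul A (tPow A k)

/-- Tropical trace: `tr A = max_i a_ii`. -/
noncomputable def tTr {n : ℕ} (A : Matrix (Fin n) (Fin n) ℝ) : ℝ :=
  ⨆ i, A i i

/-- Tropical spectral radius: `λ(A) = max_{1 ≤ k ≤ n} (tr (A^⊗k))^(1/k)`. -/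
noncomputable def tRadius {n : ℕ} (A : Matrix (Fin n) (Fin n) ℝ) : ℝ :=
  ⨆ k : Fin n, (tTr (tPow A ((k : ℕ) + 1))) ^ ((1 : ℝ) / ((k : ℕ) + 1))

/-- Kleene star: `A* = I ⊕ A ⊕ A^⊗2 ⊕ ⋯ ⊕ A^⊗(n−1)` in the max-times algebra. -/
noncomputable def kStar {n : ℕ} (A : Matrix (Fin n) (Fin n) ℝ) : Matrix (Fin n) (Fin n) ℝ :=
  fun i j => ⨆ k : Fin n, tPow A (k : ℕ) i j

/-! ### Auxiliary lemmas -/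

section Aux

variable {n : ℕ}

lemma fbdd (f : Fin n → ℝ) : BddAbove (Set.range f) :=
  (Set.finite_range f).bddAbove

lemma tPow_nonneg {C : Matrix (Fin n) (Fin n) ℝ} (hC : ∀ i j, 0 ≤ C i j) :
    ∀ k i j, 0 ≤ tPow C k i j := by
  intro k
  induction k with
  | zero => intro i j; simp only [tPow]; positivity
  | succ k ih =>
      intro i j
      exact Real.iSup_nonneg fun m => mul_nonneg (hC i m) (ih m j)

/-- Weight of a walk: product of entries along consecutive vertices. -/
noncomputable def pp (C : Matrix (Fin n) (Fin n) ℝ) : List (Fin n) → ℝ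
  | [] => 1
  | [_] => 1
  | a :: b :: l => C a b * pp C (b :: l)

lemma pp_nonneg {C : Matrix (Fin n) (Fin n) ℝ} (hC : ∀ i j, 0 ≤ C i j) :
    ∀ l, 0 ≤ pp C l := by
  intro l
  induction l with
  | nil => simp [pp]
  | cons a l ih =>
      cases l with
      | nil => simp [pp]
      | cons b l => exact mul_nonneg (hC a b) ih

lemma pp_append (C : Matrix (Fin n) (Fin n) ℝ) :
    ∀ (l1 : List (Fin n)) (a : Fin n) (l2 : List (Fin n)),
      pp C (l1 ++ a :: l2) = pp C (l1 ++ [a]) * pp C (a :: l2) := by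
  intro l1
  induction l1 with
  | nil => intro a l2; simp [pp]
  | cons b l1 ih =>
      intro a l2
      cases l1 with
      | nil =>
          cases l2 with
          | nil => simp [pp]
          | cons c l2 => simp [pp, mul_assoc]
      | cons c l1' =>
          have h1 : (b :: c :: l1') ++ a :: l2 = b :: (c :: l1' ++ a :: l2) := rfl
          have h2 : (b :: c :: l1') ++ [a] = b :: (c :: l1' ++ [a]) := rfl
          rw [h1, h2]
          have e1 : pp C (b :: (c :: l1' ++ a :: l2))
              = C b c * pp C (c :: l1' ++ a :: l2) := rfl
          have e2 : pp C (b :: (c :: l1' ++ [a])) = C b c * pp C (c :: l1' ++ [a]) := rfl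
          rw [e1, e2, ih a l2]; ring

lemma pp_le_tPow {C : Matrix (Fin n) (Fin n) ℝ} (hC : ∀ i j, 0 ≤ C i j) :
    ∀ (l : List (Fin n)) (i j : Fin n), l.head? = some i → l.getLast? = some j →
      pp C l ≤ tPow C (l.length - 1) i j := by
  intro l
  induction l with
  | nil => intro i j h; simp at h
  | cons a l ih =>
      intro i j hh hl
      cases l with
      | nil =>
          simp only [List.head?_cons, Option.some.injEq] at hh
          simp only [List.getLast?_singleton, Option.some.injEq] at hl
          subst hh
          subst hl
          simp [pp, tPow]
      | cons b l =>
          simp only [List.head?_cons, Option.some.injEq] at hh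
          subst hh
          rw [List.getLast?_cons_cons] at hl
          have hlen : (a :: b :: l).length - 1 = ((b :: l).length - 1) + 1 := by
            simp
          rw [hlen]
          have e : pp C (a :: b :: l) = C a b * pp C (b :: l) := rfl
          rw [e]
          have h1 : C a b * pp C (b :: l) ≤ C a b * tPow C ((b :: l).length - 1) b j :=
            mul_le_mul_of_nonneg_left (ih b j rfl hl) (hC a b)
          refine h1.trans ?_
          exact le_ciSup (fbdd fun m => C a m * tPow C ((b :: l).length - 1) m j) b

lemma tPow_attained {C : Matrix (Fin n) (Fin n) ℝ} (hC : ∀ i j, 0 ≤ C i j)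
    (hn : 0 < n) :
    ∀ (k : ℕ) (i j : Fin n), tPow C k i j ≤ 0 ∨
      ∃ l : List (Fin n), l.length = k + 1 ∧ l.head? = some i ∧ l.getLast? = some j ∧
        pp C l = tPow C k i j := by
  haveI : Nonempty (Fin n) := ⟨⟨0, hn⟩⟩
  intro k
  induction k with
  | zero =>
      intro i j
      by_cases h : i = j
      · subst h
        right
        exact ⟨[i], by simp, by simp, by simp, by simp [pp, tPow]⟩
      · left; simp [tPow, h]
  | succ k ih =>
      intro i j
      obtain ⟨m0, hm0⟩ := Finite.exists_max (fun m => C i m * tPow C k m j)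
      have hsup : tPow C (k + 1) i j = C i m0 * tPow C k m0 j := by
        refine le_antisymm (ciSup_le fun m => hm0 m) ?_
        exact le_ciSup (fbdd fun m => C i m * tPow C k m j) m0
      rcases ih m0 j with h | ⟨l, hlen, hh, hl, hpp⟩
      · left
        rw [hsup]
        exact mul_nonpos_of_nonneg_of_nonpos (hC i m0) h
      · right
        cases l with
        | nil => simp at hh
        | cons c t =>
            simp only [List.head?_cons, Option.some.injEq] at hh
            subst hh
            refine ⟨i :: c :: t, by simpa using hlen, rfl, ?_, ?_⟩
            · rwa [List.getLast?_cons_cons]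
            · have e : pp C (i :: c :: t) = C i c * pp C (c :: t) := rfl
              rw [e, hpp, hsup]

lemma dup_decomp {α : Type*} :
    ∀ (l : List α), ¬ l.Nodup →
      ∃ (l1 : List α) (a : α) (l2 l3 : List α), l = l1 ++ a :: (l2 ++ a :: l3) := by
  intro l
  induction l with
  | nil => intro h; exact absurd List.nodup_nil h
  | cons b l ih =>
      intro h
      by_cases hb : b ∈ l
      · obtain ⟨s, t, rfl⟩ := List.append_of_mem hb
        exact ⟨[], b, s, t, rfl⟩
      · have hnd : ¬ l.Nodup := by
          intro hnd
          exact h (List.nodup_cons.mpr ⟨hb, hnd⟩)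
        obtain ⟨l1, a, l2, l3, rfl⟩ := ih hnd
        exact ⟨b :: l1, a, l2, l3, rfl⟩

lemma head?_append_cons {α : Type*} (l1 : List α) (a : α) (m m' : List α) :
    (l1 ++ a :: m).head? = (l1 ++ a :: m').head? := by
  cases l1 <;> simp

lemma getLast?_append_cons {α : Type*} (m : List α) (a : α) (l3 : List α) :
    (m ++ a :: l3).getLast? = (a :: l3).getLast? := by
  induction m with
  | nil => rfl
  | cons b m ih =>
      cases m with
      | nil =>
          cases l3 <;> simp [List.getLast?_cons_cons]
      | cons c m =>
          rw [List.cons_append, List.cons_append, List.getLast?_cons_cons]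
          rw [List.cons_append] at ih
          exact ih

/-- Key combinatorial lemma: if all tropical traces of powers up to `n` are at most 1,
then the `n`-th power is dominated by the Kleene star. -/
lemma tPow_n_le_star {C : Matrix (Fin n) (Fin n) ℝ} (hC : ∀ i j, 0 ≤ C i j)
    (hn : 0 < n)
    (htr : ∀ k, 1 ≤ k → k ≤ n → tTr (tPow C k) ≤ 1) (i j : Fin n) :
    tPow C n i j ≤ ⨆ k : Fin n, tPow C (k : ℕ) i j := by
  haveI : Nonempty (Fin n) := ⟨⟨0, hn⟩⟩
  have hB0 : (0:ℝ) ≤ ⨆ k : Fin n, tPow C (k : ℕ) i j := by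
    refine le_trans (tPow_nonneg hC 0 i j) ?_
    exact le_ciSup (fbdd fun k : Fin n => tPow C (k : ℕ) i j) ⟨0, hn⟩
  rcases tPow_attained hC hn n i j with h | ⟨l, hlen, hh, hl, hpp⟩
  · exact h.trans hB0
  -- l has n+1 vertices in Fin n, so it has a duplicate
  have hnodup : ¬ l.Nodup := by
    intro hnd
    have := hnd.length_le_card
    simp [hlen] at this
  obtain ⟨l1, a, l2, l3, rfl⟩ := dup_decomp l hnodup
  -- split the walk
  have e1 : pp C (l1 ++ a :: (l2 ++ a :: l3))
      = pp C (l1 ++ [a]) * pp C (a :: (l2 ++ a :: l3)) := pp_append C l1 a _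
  have e2 : pp C (a :: (l2 ++ a :: l3)) = pp C ((a :: l2) ++ [a]) * pp C (a :: l3) := by
    have : a :: (l2 ++ a :: l3) = (a :: l2) ++ a :: l3 := rfl
    rw [this, pp_append C (a :: l2) a l3]
  simp only [List.length_append, List.length_cons] at hlen
  -- the cycle has weight at most 1
  have hcyc : pp C ((a :: l2) ++ [a]) ≤ 1 := by
    have hlc : ((a :: l2) ++ [a]).length - 1 = l2.length + 1 := by simp
    have h1 : pp C ((a :: l2) ++ [a]) ≤ tPow C (l2.length + 1) a a := by
      have := pp_le_tPow hC ((a :: l2) ++ [a]) a a (by cases l2 <;> simp)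
        (by rw [List.getLast?_concat])
      rwa [hlc] at this
    refine h1.trans ?_
    refine le_trans ?_ (htr (l2.length + 1) (by omega) (by omega))
    exact le_ciSup (fbdd fun m => tPow C (l2.length + 1) m m) a
  -- the shortened walk
  set l' : List (Fin n) := l1 ++ a :: l3 with hl'
  have e3 : pp C l' = pp C (l1 ++ [a]) * pp C (a :: l3) := pp_append C l1 a l3
  have hppl' : pp C (l1 ++ a :: (l2 ++ a :: l3)) ≤ pp C l' := by
    rw [e1, e2, e3]
    have h0 : 0 ≤ pp C (l1 ++ [a]) * pp C (a :: l3) :=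
      mul_nonneg (pp_nonneg hC _) (pp_nonneg hC _)
    calc pp C (l1 ++ [a]) * (pp C ((a :: l2) ++ [a]) * pp C (a :: l3))
        = (pp C (l1 ++ [a]) * pp C (a :: l3)) * pp C ((a :: l2) ++ [a]) := by ring
      _ ≤ (pp C (l1 ++ [a]) * pp C (a :: l3)) * 1 :=
          mul_le_mul_of_nonneg_left hcyc h0
      _ = pp C (l1 ++ [a]) * pp C (a :: l3) := by ring
  have hh' : l'.head? = some i := by
    rw [hl', head?_append_cons l1 a l3 (l2 ++ a :: l3)]
    exact hh
  have hlast_a : (a :: l3).getLast? = some j := by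
    have hassoc : l1 ++ a :: (l2 ++ a :: l3) = (l1 ++ a :: l2) ++ a :: l3 := by
      simp [List.append_assoc]
    rw [hassoc, getLast?_append_cons] at hl
    exact hl
  have hlast' : l'.getLast? = some j := by
    rw [hl', getLast?_append_cons]
    exact hlast_a
  have hlenl' : l'.length - 1 < n := by
    rw [hl']
    simp only [List.length_append, List.length_cons]
    omega
  have hfin : pp C l' ≤ tPow C (l'.length - 1) i j := pp_le_tPow hC l' i j hh' hlast'
  have hstep : tPow C (l'.length - 1) i j ≤ ⨆ k : Fin n, tPow C (k : ℕ) i j := by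
    have := le_ciSup (fbdd fun k : Fin n => tPow C (k : ℕ) i j) ⟨l'.length - 1, hlenl'⟩
    simpa using this
  calc tPow C n i j = pp C (l1 ++ a :: (l2 ++ a :: l3)) := hpp.symm
    _ ≤ pp C l' := hppl'
    _ ≤ _ := hfin.trans hstep

lemma tPow_scale {C : Matrix (Fin n) (Fin n) ℝ} {c : ℝ} (hc : 0 ≤ c) :
    ∀ k i j, tPow (fun i j => c * C i j) k i j = c ^ k * tPow C k i j := by
  intro k
  induction k with
  | zero => intro i j; simp [tPow]
  | succ k ih =>
      intro i j
      show (⨆ m, (c * C i m) * tPow (fun i j => c * C i j) k m j)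
          = c ^ (k + 1) * ⨆ m, C i m * tPow C k m j
      have he : ∀ m, (c * C i m) * tPow (fun i j => c * C i j) k m j
          = c ^ (k + 1) * (C i m * tPow C k m j) := by
        intro m; rw [ih m j]; ring
      simp only [he]
      rw [← Real.mul_iSup_of_nonneg (by positivity)]

lemma pp_le_pow {M : Matrix (Fin n) (Fin n) ℝ} {S : ℝ} (hM : ∀ i j, 0 ≤ M i j)
    (hMS : ∀ i j, M i j ≤ S) (hS : 0 ≤ S) :
    ∀ l : List (Fin n), pp M l ≤ S ^ (l.length - 1) := by
  intro l
  induction l with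
  | nil => simp [pp]
  | cons a l ih =>
      cases l with
      | nil => simp [pp]
      | cons b l =>
          have e : pp M (a :: b :: l) = M a b * pp M (b :: l) := rfl
          have hlen : (a :: b :: l).length - 1 = ((b :: l).length - 1) + 1 := by simp
          rw [e, hlen]
          calc M a b * pp M (b :: l) ≤ S * S ^ ((b :: l).length - 1) :=
                mul_le_mul (hMS a b) ih (pp_nonneg hM _) hS
            _ = S ^ (((b :: l).length - 1) + 1) := by ring

lemma pp_ratio {A : Matrix (Fin n) (Fin n) ℝ} {x : Fin n → ℝ} (hx : ∀ i, 0 < x i) :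
    ∀ (l : List (Fin n)) (a j : Fin n), (a :: l).getLast? = some j →
      pp (fun i j => A i j * x j / x i) (a :: l) * x a = pp A (a :: l) * x j := by
  intro l
  induction l with
  | nil =>
      intro a j hl
      simp only [List.getLast?_singleton, Option.some.injEq] at hl
      subst hl
      simp [pp]
  | cons b l ih =>
      intro a j hl
      rw [List.getLast?_cons_cons] at hl
      have h1 := ih b j hl
      have e1 : pp (fun i j => A i j * x j / x i) (a :: b :: l)
          = (A a b * x b / x a) * pp (fun i j => A i j * x j / x i) (b :: l) := rfl
      have e2 : pp A (a :: b :: l) = A a b * pp A (b :: l) := rfl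
      rw [e1, e2]
      have hxa : x a ≠ 0 := (hx a).ne'
      calc (A a b * x b / x a) * pp (fun i j => A i j * x j / x i) (b :: l) * x a
          = A a b * (pp (fun i j => A i j * x j / x i) (b :: l) * x b) := by
            field_simp
        _ = A a b * (pp A (b :: l) * x j) := by rw [h1]
        _ = A a b * pp A (b :: l) * x j := by ring

end Aux

/-- For a nonnegative matrix `A` with positive tropical spectral radius
`λ = λ(A)` and `B = (λ⁻¹ A)*`, a positive vector `x` satisfies
`max_{i,j} a_ij · x_j / x_i = λ` (i.e. minimizes `x⁻ ⊗ A ⊗ x` over positive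
vectors) if and only if `x = B ⊗ u` for some positive vector `u`. -/
theorem minimizers_xAx_eq_kleene_image (n : ℕ) (hn : 1 ≤ n)
    (A : Matrix (Fin n) (Fin n) ℝ) (hA : ∀ i j, 0 ≤ A i j)
    (hpos : 0 < tRadius A)
    (B : Matrix (Fin n) (Fin n) ℝ)
    (hB : B = kStar (fun i j => (tRadius A)⁻¹ * A i j))
    (x : Fin n → ℝ) (hx : ∀ i, 0 < x i) :
    (⨆ i, ⨆ j, A i j * x j / x i) = tRadius A ↔
      ∃ u : Fin n → ℝ, (∀ i, 0 < u i) ∧ ∀ i, x i = ⨆ j, B i j * u j := by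
  haveI : Nonempty (Fin n) := ⟨⟨0, hn⟩⟩
  set lam := tRadius A with hlamdef
  set C : Matrix (Fin n) (Fin n) ℝ := fun i j => lam⁻¹ * A i j with hCdef
  have hlam0 : 0 < lam := hpos
  have hC : ∀ i j, 0 ≤ C i j := by
    intro i j
    rw [hCdef]
    exact mul_nonneg (inv_nonneg.mpr hlam0.le) (hA i j)
  -- trace bounds for A
  have htrA_nonneg : ∀ k, 0 ≤ tTr (tPow A k) := fun k =>
    Real.iSup_nonneg fun i => tPow_nonneg hA k i i
  have htrA : ∀ k, 1 ≤ k → k ≤ n → tTr (tPow A k) ≤ lam ^ k := by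
    intro k hk1 hkn
    have hidx : k - 1 < n := by omega
    have h1 : (tTr (tPow A ((k - 1) + 1))) ^ ((1 : ℝ) / (((k - 1 : ℕ) : ℝ) + 1)) ≤ lam := by
      rw [hlamdef]
      unfold tRadius
      have := le_ciSup (fbdd fun m : Fin n =>
        (tTr (tPow A ((m : ℕ) + 1))) ^ ((1 : ℝ) / (((m : ℕ) : ℝ) + 1))) ⟨k - 1, hidx⟩
      simpa using this
    have hk : k - 1 + 1 = k := by omega
    have hc1 : ((k - 1 : ℕ) : ℝ) + 1 = (k : ℝ) := by
      exact_mod_cast congrArg (Nat.cast : ℕ → ℝ) hk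
    rw [hk, hc1] at h1
    have ht0 := htrA_nonneg k
    have hkne : (k : ℝ) ≠ 0 := by positivity
    have key : tTr (tPow A k) = ((tTr (tPow A k)) ^ ((1 : ℝ) / (k : ℝ))) ^ (k : ℕ) := by
      rw [← Real.rpow_natCast ((tTr (tPow A k)) ^ ((1 : ℝ) / (k : ℝ))) k,
        ← Real.rpow_mul ht0, one_div_mul_cancel hkne, Real.rpow_one]
    rw [key]
    exact pow_le_pow_left₀ (Real.rpow_nonneg ht0 _) h1 k
  -- trace bound for C
  have htrC : ∀ k, 1 ≤ k → k ≤ n → tTr (tPow C k) ≤ 1 := by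
    intro k hk1 hkn
    have hscale : ∀ i, tPow C k i i = lam⁻¹ ^ k * tPow A k i i := by
      intro i
      rw [hCdef]
      exact tPow_scale (inv_nonneg.mpr hlam0.le) k i i
    have heq : tTr (tPow C k) = lam⁻¹ ^ k * tTr (tPow A k) := by
      unfold tTr
      simp only [hscale]
      rw [← Real.mul_iSup_of_nonneg (by positivity)]
    rw [heq]
    calc lam⁻¹ ^ k * tTr (tPow A k) ≤ lam⁻¹ ^ k * lam ^ k :=
          mul_le_mul_of_nonneg_left (htrA k hk1 hkn) (by positivity)
      _ = 1 := by rw [← mul_pow, inv_mul_cancel₀ hlam0.ne', one_pow]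
  -- any power up to n is dominated by the star
  have hstar : ∀ s, s ≤ n → ∀ i m, tPow C s i m ≤ ⨆ k : Fin n, tPow C (k : ℕ) i m := by
    intro s hs i m
    rcases lt_or_eq_of_le hs with h | h
    · have := le_ciSup (fbdd fun k : Fin n => tPow C (k : ℕ) i m) ⟨s, h⟩
      simpa using this
    · subst h
      exact tPow_n_le_star hC hn htrC i m
  have hBentry : ∀ i m, B i m = ⨆ k : Fin n, tPow C (k : ℕ) i m := by
    intro i m; rw [hB]; rfl
  -- basic facts about the Rayleigh-type quotient
  have hM0 : ∀ i j, 0 ≤ A i j * x j / x i := fun i j =>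
    div_nonneg (mul_nonneg (hA i j) (hx j).le) (hx i).le
  have hMS : ∀ i j, A i j * x j / x i ≤ ⨆ i, ⨆ j, A i j * x j / x i := by
    intro i j
    refine le_trans (le_ciSup (fbdd fun j => A i j * x j / x i) j) ?_
    exact le_ciSup (fbdd fun i => ⨆ j, A i j * x j / x i) i
  have hS0 : 0 ≤ ⨆ i, ⨆ j, A i j * x j / x i :=
    le_trans (hM0 ⟨0, hn⟩ ⟨0, hn⟩) (hMS _ _)
  -- the lower bound: lam ≤ sup
  have hlow : lam ≤ ⨆ i, ⨆ j, A i j * x j / x i := by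
    obtain ⟨k0, hk0⟩ := Finite.exists_max (fun m : Fin n =>
      (tTr (tPow A ((m : ℕ) + 1))) ^ ((1 : ℝ) / (((m : ℕ) : ℝ) + 1)))
    have hlameq : lam = (tTr (tPow A ((k0 : ℕ) + 1))) ^ ((1 : ℝ) / (((k0 : ℕ) : ℝ) + 1)) := by
      rw [hlamdef]
      unfold tRadius
      exact le_antisymm (ciSup_le hk0) (le_ciSup (fbdd fun m : Fin n =>
        (tTr (tPow A ((m : ℕ) + 1))) ^ ((1 : ℝ) / (((m : ℕ) : ℝ) + 1))) k0)
    set K : ℕ := (k0 : ℕ) + 1 with hK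
    have hcast : ((k0 : ℕ) : ℝ) + 1 = (K : ℝ) := by rw [hK]; push_cast; ring
    rw [hcast] at hlameq
    have ht0 := htrA_nonneg K
    have hKne : (K : ℝ) ≠ 0 := by positivity
    have hteq : tTr (tPow A K) = lam ^ K := by
      have hid : ((tTr (tPow A K)) ^ ((1 : ℝ) / (K : ℝ))) ^ (K : ℕ) = tTr (tPow A K) := by
        rw [← Real.rpow_natCast _ K, ← Real.rpow_mul ht0, one_div_mul_cancel hKne,
          Real.rpow_one]
      rw [hlameq, hid]
    have htpos : 0 < tTr (tPow A K) := by
      rw [hteq]; exact pow_pos hlam0 K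
    obtain ⟨i0, hi0⟩ := Finite.exists_max (fun i : Fin n => tPow A K i i)
    have hdiag : tTr (tPow A K) = tPow A K i0 i0 :=
      le_antisymm (ciSup_le hi0) (le_ciSup (fbdd fun i : Fin n => tPow A K i i) i0)
    rcases tPow_attained hA hn K i0 i0 with h | ⟨l, hlen, hh, hl, hppl⟩
    · exfalso; rw [hdiag] at htpos; linarith
    · cases l with
      | nil => simp at hh
      | cons c t =>
          simp only [List.head?_cons, Option.some.injEq] at hh
          subst hh
          have hq : pp (fun i j => A i j * x j / x i) (c :: t) * x c
              = pp A (c :: t) * x c := pp_ratio hx t c c hl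
          have hppM : pp (fun i j => A i j * x j / x i) (c :: t) = pp A (c :: t) :=
            mul_right_cancel₀ (hx c).ne' hq
          have hbound := pp_le_pow hM0 hMS hS0 (c :: t)
          have hlen' : (c :: t).length - 1 = K := by rw [hlen]; omega
          have hpow : lam ^ K ≤ (⨆ i, ⨆ j, A i j * x j / x i) ^ K := by
            calc lam ^ K = tTr (tPow A K) := hteq.symm
              _ = tPow A K c c := hdiag
              _ = pp A (c :: t) := hppl.symm
              _ = pp (fun i j => A i j * x j / x i) (c :: t) := hppM.symm
              _ ≤ (⨆ i, ⨆ j, A i j * x j / x i) ^ ((c :: t).length - 1) := hbound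
              _ = (⨆ i, ⨆ j, A i j * x j / x i) ^ K := by rw [hlen']
          exact (pow_le_pow_iff_left₀ hlam0.le hS0 (by omega)).mp hpow
  -- the key reformulation
  have hCineq_iff : (⨆ i, ⨆ j, A i j * x j / x i) = lam ↔ ∀ i j, C i j * x j ≤ x i := by
    constructor
    · intro hS i j
      have h1 : A i j * x j / x i ≤ lam := hS ▸ hMS i j
      have h2 : A i j * x j ≤ lam * x i := (div_le_iff₀ (hx i)).mp h1
      rw [hCdef]
      calc lam⁻¹ * A i j * x j = lam⁻¹ * (A i j * x j) := by ring
        _ ≤ lam⁻¹ * (lam * x i) := mul_le_mul_of_nonneg_left h2 (by positivity)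
        _ = x i := by field_simp
    · intro h
      refine le_antisymm ?_ hlow
      refine ciSup_le fun i => ciSup_le fun j => ?_
      have h1 := h i j
      simp only [hCdef] at h1
      rw [div_le_iff₀ (hx i)]
      have h2 := mul_le_mul_of_nonneg_left h1 hlam0.le
      calc A i j * x j = lam * (lam⁻¹ * A i j * x j) := by field_simp
        _ ≤ lam * x i := h2
  -- forward: the inequality gives x = B ⊗ x
  have hstarx : (∀ i j, C i j * x j ≤ x i) → ∀ i, x i = ⨆ j, B i j * x j := by
    intro h i
    have hk : ∀ k i j, tPow C k i j * x j ≤ x i := by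
      intro k
      induction k with
      | zero =>
          intro i j
          by_cases hij : i = j
          · subst hij; simp [tPow]
          · simp [tPow, hij, (hx i).le]
      | succ k ih =>
          intro i j
          show (⨆ m, C i m * tPow C k m j) * x j ≤ x i
          rw [Real.iSup_mul_of_nonneg (hx j).le]
          refine Real.iSup_le (fun m => ?_) (hx i).le
          calc C i m * tPow C k m j * x j = C i m * (tPow C k m j * x j) := by ring
            _ ≤ C i m * x m := mul_le_mul_of_nonneg_left (ih m j) (hC i m)
            _ ≤ x i := h i m
    refine le_antisymm ?_ ?_
    · have h1 : (1 : ℝ) ≤ B i i := by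
        rw [hBentry]
        have := le_ciSup (fbdd fun k : Fin n => tPow C (k : ℕ) i i) ⟨0, hn⟩
        simpa [tPow] using this
      have h2 : x i ≤ B i i * x i := le_mul_of_one_le_left (hx i).le h1
      exact h2.trans (le_ciSup (fbdd fun j => B i j * x j) i)
    · refine ciSup_le fun j => ?_
      rw [hBentry, Real.iSup_mul_of_nonneg (hx j).le]
      exact Real.iSup_le (fun k => hk (k : ℕ) i j) (hx i).le
  -- backward: x = B ⊗ u gives the inequality
  have hback : ∀ u : Fin n → ℝ, (∀ i, 0 < u i) → (∀ i, x i = ⨆ j, B i j * u j) →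
      ∀ i j, C i j * x j ≤ x i := by
    intro u hu hxu i j
    have hCB : ∀ m, C i j * B j m ≤ B i m := by
      intro m
      rw [hBentry, hBentry, Real.mul_iSup_of_nonneg (hC i j)]
      refine ciSup_le fun k => ?_
      have h1 : C i j * tPow C (k : ℕ) j m ≤ tPow C ((k : ℕ) + 1) i m :=
        le_ciSup (fbdd fun j' => C i j' * tPow C (k : ℕ) j' m) j
      exact h1.trans (hstar ((k : ℕ) + 1) (Nat.succ_le_of_lt k.isLt) i m)
    rw [hxu j, hxu i, Real.mul_iSup_of_nonneg (hC i j)]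
    refine ciSup_le fun m => ?_
    calc C i j * (B j m * u m) = (C i j * B j m) * u m := by ring
      _ ≤ B i m * u m := mul_le_mul_of_nonneg_right (hCB m) (hu m).le
      _ ≤ ⨆ m, B i m * u m := le_ciSup (fbdd fun m => B i m * u m) m
  constructor
  · intro hS
    exact ⟨x, hx, hstarx (hCineq_iff.mp hS)⟩
  · rintro ⟨u, hu, hxu⟩
    exact hCineq_iff.mpr (hback u hu hxu)
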